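/- For every integer k ≥ 2, cos(π/(2·(4k+5))) / (cos(π/(4k+5)) − sin(3π/(2·(4k+5)))) < 1 + 2·sin(π/(4k+2)). -/

import Mathlib

open Real

private lemma key_poly (r : ℝ) (hr : 2 ≤ r) :
    ((4*r+5)^4 - 3.141592^2/8*(4*r+5)^2 + 5/1536*3.141593^4) * (4*r+2)^4
      < ((4*r+2)^4 + 2*3.141592*(4*r+2)^3 - 3.141593^3/3*(4*r+2) - 5/48*3.141593^4)
        * ((4*r+5)^4 - 3*3.141593/2*(4*r+5)^3 - 3.141593^2/2*(4*r+5)^2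
            + 9/16*3.141592^3*(4*r+5) - 485/1536*3.141593^4) := by
  have h0 : (0:ℝ) ≤ r - 2 := by linarith
  nlinarith [pow_nonneg h0 2, pow_nonneg h0 3, pow_nonneg h0 4, pow_nonneg h0 5,
    pow_nonneg h0 6, pow_nonneg h0 7, h0]

private lemma key_den (r : ℝ) (hr : 2 ≤ r) :
    (0:ℝ) < (4*r+5)^4 - 3*3.141593/2*(4*r+5)^3 - 3.141593^2/2*(4*r+5)^2
            + 9/16*3.141592^3*(4*r+5) - 485/1536*3.141593^4 := by
  have h0 : (0:ℝ) ≤ r - 2 := by linarith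
  nlinarith [pow_nonneg h0 2, pow_nonneg h0 3, pow_nonneg h0 4, h0]

set_option maxHeartbeats 2000000 in
theorem ub_4kplus5_lt_lb_4kplus2 (k : ℕ) (hk : 2 ≤ k) :
    cos (π / (2 * (4 * (k : ℝ) + 5))) /
        (cos (π / (4 * (k : ℝ) + 5)) - sin (3 * π / (2 * (4 * (k : ℝ) + 5)))) <
      1 + 2 * sin (π / (4 * (k : ℝ) + 2)) := by
  have hr : (2:ℝ) ≤ (k : ℝ) := by exact_mod_cast hk
  set r : ℝ := (k : ℝ) with hrdef
  have hp : (3.141592:ℝ) < π := pi_gt_d6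
  have hq : π < 3.141593 := pi_lt_d6
  have hπ0 : (0:ℝ) < π := pi_pos
  have hA0 : (0:ℝ) < 4*r+5 := by linarith
  have hA13 : (13:ℝ) ≤ 4*r+5 := by linarith
  have hB0 : (0:ℝ) < 4*r+2 := by linarith
  have hB10 : (10:ℝ) ≤ 4*r+2 := by linarith
  have hA4 : (0:ℝ) < (4*r+5)^4 := by positivity
  have hB4 : (0:ℝ) < (4*r+2)^4 := by positivity
  -- π powers bounds
  have hπ2lo : (3.141592:ℝ)^2 ≤ π^2 := by nlinarith
  have hπ2hi : π^2 ≤ (3.141593:ℝ)^2 := by nlinarith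
  have hπ3lo : (3.141592:ℝ)^3 ≤ π^3 := by nlinarith
  have hπ3hi : π^3 ≤ (3.141593:ℝ)^3 := by nlinarith
  have hπ4hi : π^4 ≤ (3.141593:ℝ)^4 := by nlinarith
  -- bound 1 : cos (π/(2A)) * A^4
  have h1 : cos (π / (2*(4*r+5))) * (4*r+5)^4
      ≤ (4*r+5)^4 - 3.141592^2/8*(4*r+5)^2 + 5/1536*3.141593^4 := by
    set x : ℝ := π / (2*(4*r+5)) with hx
    have hx0 : 0 < x := by positivity
    have hx1 : |x| ≤ 1 := by
      rw [abs_of_pos hx0, hx, div_le_one (by linarith)]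
      linarith
    have hcb := abs_le.1 (Real.cos_bound hx1)
    have hcb' : cos x ≤ 1 - x^2/2 + x^4*(5/96) := by
      rw [abs_of_pos hx0] at hcb
      linarith [hcb.2]
    have e2 : x^2 * (4*r+5)^2 = π^2/4 := by
      rw [hx]; field_simp; ring
    have e4 : x^4 * (4*r+5)^4 = π^4/16 := by
      rw [hx]; field_simp; ring
    have step : cos x * (4*r+5)^4 ≤ (1 - x^2/2 + x^4*(5/96)) * (4*r+5)^4 :=
      mul_le_mul_of_nonneg_right hcb' hA4.le
    have e : (1 - x^2/2 + x^4*(5/96)) * (4*r+5)^4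
        = (4*r+5)^4 - (x^2*(4*r+5)^2)*(4*r+5)^2/2 + (x^4*(4*r+5)^4)*(5/96) := by ring
    rw [e, e2, e4] at step
    have hA2 : (0:ℝ) ≤ (4*r+5)^2 := sq_nonneg _
    nlinarith [mul_le_mul_of_nonneg_right hπ2lo hA2]
  -- bound 2 : (cos (π/A) - sin (3π/(2A))) * A^4
  have h2 : ((4*r+5)^4 - 3*3.141593/2*(4*r+5)^3 - 3.141593^2/2*(4*r+5)^2
        + 9/16*3.141592^3*(4*r+5) - 485/1536*3.141593^4)
      ≤ (cos (π / (4*r+5)) - sin (3*π / (2*(4*r+5)))) * (4*r+5)^4 := by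
    set z : ℝ := π / (4*r+5) with hz
    set y : ℝ := 3*π / (2*(4*r+5)) with hy
    have hz0 : 0 < z := by positivity
    have hy0 : 0 < y := by positivity
    have hz1 : |z| ≤ 1 := by
      rw [abs_of_pos hz0, hz, div_le_one (by linarith)]; linarith
    have hy1 : |y| ≤ 1 := by
      rw [abs_of_pos hy0, hy, div_le_one (by linarith)]; linarith
    have hcb := abs_le.1 (Real.cos_bound hz1)
    have hsb := abs_le.1 (Real.sin_bound hy1)
    have hcb' : 1 - z^2/2 - z^4*(5/96) ≤ cos z := by
      rw [abs_of_pos hz0] at hcb; linarith [hcb.1]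
    have hsb' : sin y ≤ y - y^3/6 + y^4*(5/96) := by
      rw [abs_of_pos hy0] at hsb; linarith [hsb.2, show y^5/100 ≤ y^4*(5/96) by nlinarith [pow_pos hy0 4, abs_le.1 hy1]]
    have ez2 : z^2 * (4*r+5)^2 = π^2 := by rw [hz]; field_simp
    have ez4 : z^4 * (4*r+5)^4 = π^4 := by rw [hz]; field_simp
    have ey1 : y * (4*r+5) = 3*π/2 := by rw [hy]; field_simp
    have ey3 : y^3 * (4*r+5)^3 = 27*π^3/8 := by rw [hy]; field_simp; ring
    have ey4 : y^4 * (4*r+5)^4 = 81*π^4/16 := by rw [hy]; field_simp; ring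
    have step : (1 - z^2/2 - z^4*(5/96) - (y - y^3/6 + y^4*(5/96))) * (4*r+5)^4
        ≤ (cos z - sin y) * (4*r+5)^4 :=
      mul_le_mul_of_nonneg_right (by linarith) hA4.le
    have e : (1 - z^2/2 - z^4*(5/96) - (y - y^3/6 + y^4*(5/96))) * (4*r+5)^4
        = (4*r+5)^4 - (z^2*(4*r+5)^2)*(4*r+5)^2/2 - (z^4*(4*r+5)^4)*(5/96)
          - (y*(4*r+5))*(4*r+5)^3 + (y^3*(4*r+5)^3)*(4*r+5)/6
          - (y^4*(4*r+5)^4)*(5/96) := by ring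
    rw [e, ez2, ez4, ey1, ey3, ey4] at step
    have hA2 : (0:ℝ) ≤ (4*r+5)^2 := sq_nonneg _
    have hA1 : (0:ℝ) ≤ 4*r+5 := hA0.le
    have hA3 : (0:ℝ) ≤ (4*r+5)^3 := by positivity
    nlinarith [mul_le_mul_of_nonneg_right hπ2hi hA2,
      mul_le_mul_of_nonneg_right hπ3lo hA1,
      mul_le_mul_of_nonneg_right (show 3*π/2 ≤ 3*3.141593/2 by linarith) hA3]
  -- bound 3 : sin (π/B) * B^4
  have h3 : 3.141592*(4*r+2)^3 - 3.141593^3/6*(4*r+2) - 5/96*3.141593^4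
      ≤ sin (π / (4*r+2)) * (4*r+2)^4 := by
    set x : ℝ := π / (4*r+2) with hx
    have hx0 : 0 < x := by positivity
    have hx1 : |x| ≤ 1 := by
      rw [abs_of_pos hx0, hx, div_le_one (by linarith)]; linarith
    have hsb := abs_le.1 (Real.sin_bound hx1)
    have hsb' : x - x^3/6 - x^4*(5/96) ≤ sin x := by
      rw [abs_of_pos hx0] at hsb; linarith [hsb.1, show x^5/100 ≤ x^4*(5/96) by nlinarith [pow_pos hx0 4, abs_le.1 hx1]]
    have e1 : x * (4*r+2) = π := by rw [hx]; field_simp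
    have e3 : x^3 * (4*r+2)^3 = π^3 := by rw [hx]; field_simp
    have e4 : x^4 * (4*r+2)^4 = π^4 := by rw [hx]; field_simp
    have step : (x - x^3/6 - x^4*(5/96)) * (4*r+2)^4 ≤ sin x * (4*r+2)^4 :=
      mul_le_mul_of_nonneg_right hsb' hB4.le
    have e : (x - x^3/6 - x^4*(5/96)) * (4*r+2)^4
        = (x*(4*r+2))*(4*r+2)^3 - (x^3*(4*r+2)^3)*(4*r+2)/6
          - (x^4*(4*r+2)^4)*(5/96) := by ring
    rw [e, e1, e3, e4] at step
    have hB1 : (0:ℝ) ≤ 4*r+2 := hB0.le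
    have hB3 : (0:ℝ) ≤ (4*r+2)^3 := by positivity
    nlinarith [mul_le_mul_of_nonneg_right hp.le hB3,
      mul_le_mul_of_nonneg_right hπ3hi hB1]
  -- denominator positivity
  have hDb := key_den r hr
  have hden : 0 < cos (π / (4*r+5)) - sin (3*π / (2*(4*r+5))) := by
    nlinarith [h2, hDb, hA4]
  have hsin0 : 0 ≤ sin (π / (4*r+2)) := by
    apply Real.sin_nonneg_of_nonneg_of_le_pi
    · positivity
    · rw [div_le_iff₀ hB0]; nlinarith
  -- assemble
  have key := key_poly r hr
  have goal4 : cos (π / (2*(4*r+5))) * ((4*r+5)^4 * (4*r+2)^4)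
      < ((1 + 2 * sin (π / (4*r+2))) * (cos (π / (4*r+5)) - sin (3*π / (2*(4*r+5)))))
        * ((4*r+5)^4 * (4*r+2)^4) := by
    have s1 : cos (π / (2*(4*r+5))) * ((4*r+5)^4 * (4*r+2)^4)
        ≤ ((4*r+5)^4 - 3.141592^2/8*(4*r+5)^2 + 5/1536*3.141593^4) * (4*r+2)^4 := by
      nlinarith [mul_le_mul_of_nonneg_right h1 hB4.le]
    have s3 : ((4*r+2)^4 + 2*3.141592*(4*r+2)^3 - 3.141593^3/3*(4*r+2) - 5/48*3.141593^4)
        ≤ (4*r+2)^4 + 2 * (sin (π / (4*r+2)) * (4*r+2)^4) := by linarith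
    have s4 : ((4*r+2)^4 + 2*3.141592*(4*r+2)^3 - 3.141593^3/3*(4*r+2) - 5/48*3.141593^4)
          * ((4*r+5)^4 - 3*3.141593/2*(4*r+5)^3 - 3.141593^2/2*(4*r+5)^2
            + 9/16*3.141592^3*(4*r+5) - 485/1536*3.141593^4)
        ≤ ((4*r+2)^4 + 2 * (sin (π / (4*r+2)) * (4*r+2)^4))
          * ((cos (π / (4*r+5)) - sin (3*π / (2*(4*r+5)))) * (4*r+5)^4) := by
      apply mul_le_mul s3 h2 hDb.le
      nlinarith [mul_nonneg hsin0 hB4.le]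
    have e : ((4*r+2)^4 + 2 * (sin (π / (4*r+2)) * (4*r+2)^4))
          * ((cos (π / (4*r+5)) - sin (3*π / (2*(4*r+5)))) * (4*r+5)^4)
        = ((1 + 2 * sin (π / (4*r+2))) * (cos (π / (4*r+5)) - sin (3*π / (2*(4*r+5)))))
          * ((4*r+5)^4 * (4*r+2)^4) := by ring
    calc cos (π / (2*(4*r+5))) * ((4*r+5)^4 * (4*r+2)^4)
        ≤ ((4*r+5)^4 - 3.141592^2/8*(4*r+5)^2 + 5/1536*3.141593^4) * (4*r+2)^4 := s1
      _ < _ := key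
      _ ≤ _ := s4
      _ = _ := e
  have hAB4 : (0:ℝ) < (4*r+5)^4 * (4*r+2)^4 := mul_pos hA4 hB4
  have main : cos (π / (2*(4*r+5)))
      < (1 + 2 * sin (π / (4*r+2))) * (cos (π / (4*r+5)) - sin (3*π / (2*(4*r+5)))) :=
    lt_of_mul_lt_mul_right (by linarith [goal4]) hAB4.le
  rw [div_lt_iff₀ hden]
  exact main
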